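/- arXiv:2105.09056 — 2 statements merged into one kernel-verified Lean document; each statement's English description precedes it below -/
import Mathlib

section
/- Let w₁, w₂, w₃ > 0 and let D ∈ M_4(ℝ) be the Dirac operator of the chain w₁−w₂−w₃, i.e. D_{i,i+1} = D_{i+1,i} = 1/w_i for i = 1,2,3 and all other entries 0. Then the noncommutative length λ(w₁−w₂−w₃) = d^D(1,4) equals sqrt(w₁²+w₂²)·sqrt(w₃²+w₂²)/w₂ if w₂ > sqrt(w₁w₃), and equals w₁ + w₃ if w₂ ≤ sqrt(w₁w₃). -/
set_option maxHeartbeats 1600000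

open scoped ENNReal

/-- The operator norm on square matrices induced by the Euclidean (ℓ²) norm. -/
noncomputable def opNorm {ι : Type*} [Finite ι] (M : Matrix ι ι ℂ) : ℝ :=
  letI := Fintype.ofFinite ι
  letI := Classical.decEq ι
  ‖Matrix.toEuclideanCLM (𝕜 := ℂ) M‖

/-- The commutator `[D, π(a)]` of a matrix with the diagonal matrix of `a`. -/
noncomputable def commD {ι : Type*} [Finite ι] (D : Matrix ι ι ℂ) (a : ι → ℂ) : Matrix ι ι ℂ :=
  letI := Fintype.ofFinite ι
  letI := Classical.decEq ι
  D * Matrix.diagonal a - Matrix.diagonal a * D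

/-- Connes' noncommutative distance associated to the Dirac operator `D`. -/
noncomputable def ncDist {ι : Type*} [Finite ι] (D : Matrix ι ι ℂ) (i j : ι) : ℝ≥0∞ :=
  ⨆ (a : ι → ℂ) (_ : opNorm (commD D a) ≤ 1), ENNReal.ofReal ‖a i - a j‖

/-- The weight of an edge: the inverse of `|D i j|` (infinite if `D i j = 0`). -/
noncomputable def eWeight {ι : Type*} (D : Matrix ι ι ℂ) (u v : ι) : ℝ≥0∞ :=
  (ENNReal.ofReal ‖D u v‖)⁻¹

/-- Adjacency in the graph `G_D`. -/
def Adjac {ι : Type*} (D : Matrix ι ι ℂ) (u v : ι) : Prop := u ≠ v ∧ D u v ≠ 0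

/-- The length of a walk `i :: p` computed with weights `eWeight D`. -/
noncomputable def walkLength {ι : Type*} (D : Matrix ι ι ℂ) : ι → List ι → ℝ≥0∞
  | _, [] => 0
  | u, v :: rest => eWeight D u v + walkLength D v rest

/-- `i :: p` is a walk from `i` to `j` in the graph `G_D`. -/
def IsWalk {ι : Type*} (D : Matrix ι ι ℂ) (i j : ι) (p : List ι) : Prop :=
  List.Chain (Adjac D) i p ∧ (i :: p).getLast (List.cons_ne_nil _ _) = j

/-- `i` and `j` lie in the same connected component of `G_D`. -/
def Conn {ι : Type*} (D : Matrix ι ι ℂ) (i j : ι) : Prop := ∃ p, IsWalk D i j p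

/-- The geodesic (weighted shortest-path) distance on `G_D`. -/
noncomputable def gDist {ι : Type*} (D : Matrix ι ι ℂ) (i j : ι) : ℝ≥0∞ :=
  ⨅ (p : List ι) (_ : IsWalk D i j p), walkLength D i p

/-! ### Auxiliary lemmas -/

section Aux

lemma keyB_aux (t1 t2 t3 : ℝ) (h1 : 0 ≤ t1) (h2 : 0 ≤ t2) (h3 : 0 ≤ t3)
    (hA : t1^2 + t2^2 ≤ 1) (hC : t2^2 + t3^2 ≤ 1)
    (hins : (t1*(t1*(1-t3^2)) + t2*t2)^2 + (t3*t2)^2 ≤ (t1*(1-t3^2))^2 + t2^2) :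
    t2^2 ≤ (1-t1^2)*(1-t3^2) := by
  nlinarith [sq_nonneg (t1*(1-t3^2)), sq_nonneg t2, sq_nonneg (1-t3^2),
    mul_nonneg (mul_nonneg h1 h1) (sq_nonneg (1-t3^2)), sq_nonneg (t2^2 - (1-t1^2)*(1-t3^2))]

lemma key1_aux (w1 w2 w3 t1 t2 t3 : ℝ) (hw1 : 0 < w1) (hw2 : 0 < w2) (hw3 : 0 < w3)
    (h1 : 0 ≤ t1) (h2 : 0 ≤ t2) (h3 : 0 ≤ t3) (hA : t1 ≤ 1) (hC : t3 ≤ 1)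
    (hB : t2^2 ≤ (1-t1^2)*(1-t3^2)) :
    w1*t1 + w2*t2 + w3*t3 ≤ Real.sqrt (w1^2+w2^2) * Real.sqrt (w3^2+w2^2) / w2 := by
  set P := Real.sqrt (w1^2+w2^2) with hP
  set Q := Real.sqrt (w3^2+w2^2) with hQ
  have hP0 : 0 < P := Real.sqrt_pos.2 (by positivity)
  have hQ0 : 0 < Q := Real.sqrt_pos.2 (by positivity)
  have hP2 : P^2 = w1^2+w2^2 := Real.sq_sqrt (by positivity)
  have hQ2 : Q^2 = w3^2+w2^2 := Real.sq_sqrt (by positivity)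
  have hp1 : 0 ≤ 1 - t1^2 := by nlinarith
  have hp3 : 0 ≤ 1 - t3^2 := by nlinarith
  have hmid : 2*P*Q*t2 ≤ P^2*(1-t1^2) + Q^2*(1-t3^2) := by
    have hsq : (2*P*Q*t2)^2 ≤ (P^2*(1-t1^2) + Q^2*(1-t3^2))^2 := by
      nlinarith [sq_nonneg (P^2*(1-t1^2) - Q^2*(1-t3^2)),
        mul_le_mul_of_nonneg_left hB (mul_nonneg (mul_nonneg (sq_nonneg P) (sq_nonneg Q)) (by norm_num : (0:ℝ) ≤ 4))]
    have hr : 0 ≤ P^2*(1-t1^2) + Q^2*(1-t3^2) := by positivity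
    nlinarith [mul_nonneg (mul_nonneg (mul_nonneg (by norm_num : (0:ℝ) ≤ 2) hP0.le) hQ0.le) h2]
  rw [le_div_iff₀ hw2]
  nlinarith [sq_nonneg (w1*Q - w2*P*t1), sq_nonneg (w3*P - w2*Q*t3),
    mul_le_mul_of_nonneg_left hmid (sq_nonneg w2), mul_pos hP0 hQ0]

lemma key2_aux (w1 w2 w3 t1 t2 t3 : ℝ) (hw1 : 0 < w1) (hw2 : 0 < w2) (hw3 : 0 < w3)
    (h1 : 0 ≤ t1) (h2 : 0 ≤ t2) (h3 : 0 ≤ t3) (hA : t1 ≤ 1) (hC : t3 ≤ 1)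
    (hB : t2^2 ≤ (1-t1^2)*(1-t3^2)) (hw : w2^2 ≤ w1*w3) :
    w1*t1 + w2*t2 + w3*t3 ≤ w1 + w3 := by
  have hp1 : 0 ≤ 1 - t1^2 := by nlinarith
  have hp3 : 0 ≤ 1 - t3^2 := by nlinarith
  have key : w2*t2 ≤ (w1*(1-t1^2) + w3*(1-t3^2))/2 := by
    have h4 : (w2*t2)^2 ≤ ((w1*(1-t1^2) + w3*(1-t3^2))/2)^2 := by
      nlinarith [sq_nonneg (w1*(1-t1^2) - w3*(1-t3^2)),
        mul_le_mul hw hB (sq_nonneg t2) (mul_nonneg hw1.le hw3.le)]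
    have h5 : 0 ≤ (w1*(1-t1^2) + w3*(1-t3^2))/2 := by positivity
    nlinarith [mul_nonneg hw2.le h2]
  nlinarith [mul_nonneg hw1.le (sq_nonneg (1-t1)), mul_nonneg hw3.le (sq_nonneg (1-t3))]

/-! ### operator-norm plumbing -/

lemma opNorm_eq (M : Matrix (Fin 4) (Fin 4) ℂ) :
    opNorm M = ‖Matrix.toEuclideanCLM (𝕜 := ℂ) M‖ := by
  unfold opNorm
  congr!

lemma commD_eq {ι : Type*} [Fintype ι] [DecidableEq ι] (D : Matrix ι ι ℂ) (a : ι → ℂ) :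
    commD D a = D * Matrix.diagonal a - Matrix.diagonal a * D := by
  unfold commD
  congr!

lemma commD_apply {ι : Type*} [Fintype ι] [DecidableEq ι] (D : Matrix ι ι ℂ) (a : ι → ℂ) (i j : ι) :
    commD D a i j = D i j * (a j - a i) := by
  rw [commD_eq, Matrix.sub_apply, Matrix.mul_diagonal, Matrix.diagonal_mul]
  ring

lemma norm_equiv_symm (u : Fin 4 → ℂ) :
    ‖(WithLp.equiv 2 (Fin 4 → ℂ)).symm u‖ = Real.sqrt (‖u 0‖^2 + ‖u 1‖^2 + ‖u 2‖^2 + ‖u 3‖^2) := by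
  rw [EuclideanSpace.norm_eq]
  congr 1
  simp [Fin.sum_univ_four, WithLp.equiv_symm_apply]

lemma toEuclideanCLM_equiv_symm' (M : Matrix (Fin 4) (Fin 4) ℂ) (u : Fin 4 → ℂ) :
    Matrix.toEuclideanCLM (𝕜 := ℂ) M ((WithLp.equiv 2 (Fin 4 → ℂ)).symm u) =
      (WithLp.equiv 2 (Fin 4 → ℂ)).symm (M.mulVec u) := rfl

lemma opNorm_le_one_of (M : Matrix (Fin 4) (Fin 4) ℂ)
    (h : ∀ v : Fin 4 → ℂ,
      ‖M.mulVec v 0‖^2 + ‖M.mulVec v 1‖^2 + ‖M.mulVec v 2‖^2 + ‖M.mulVec v 3‖^2 ≤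
        ‖v 0‖^2 + ‖v 1‖^2 + ‖v 2‖^2 + ‖v 3‖^2) : opNorm M ≤ 1 := by
  rw [opNorm_eq]
  refine ContinuousLinearMap.opNorm_le_bound _ zero_le_one fun x => ?_
  rw [one_mul]
  have hx : x = (WithLp.equiv 2 (Fin 4 → ℂ)).symm (WithLp.equiv 2 (Fin 4 → ℂ) x) := rfl
  rw [hx, toEuclideanCLM_equiv_symm', norm_equiv_symm, norm_equiv_symm]
  exact Real.sqrt_le_sqrt (h _)

lemma quad_of_opNorm_le_one (M : Matrix (Fin 4) (Fin 4) ℂ) (h : opNorm M ≤ 1) (v : Fin 4 → ℂ) :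
    ‖M.mulVec v 0‖^2 + ‖M.mulVec v 1‖^2 + ‖M.mulVec v 2‖^2 + ‖M.mulVec v 3‖^2 ≤
      ‖v 0‖^2 + ‖v 1‖^2 + ‖v 2‖^2 + ‖v 3‖^2 := by
  rw [opNorm_eq] at h
  have h0 := (Matrix.toEuclideanCLM (𝕜 := ℂ) M).le_opNorm ((WithLp.equiv 2 (Fin 4 → ℂ)).symm v)
  rw [toEuclideanCLM_equiv_symm', norm_equiv_symm, norm_equiv_symm] at h0
  have h2 : Real.sqrt (‖M.mulVec v 0‖^2 + ‖M.mulVec v 1‖^2 + ‖M.mulVec v 2‖^2 + ‖M.mulVec v 3‖^2) ≤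
      Real.sqrt (‖v 0‖^2 + ‖v 1‖^2 + ‖v 2‖^2 + ‖v 3‖^2) := by
    calc _ ≤ _ := h0
    _ ≤ _ := by
      have h3 : (0:ℝ) ≤ Real.sqrt (‖v 0‖^2 + ‖v 1‖^2 + ‖v 2‖^2 + ‖v 3‖^2) := Real.sqrt_nonneg _
      nlinarith
  exact (Real.sqrt_le_sqrt_iff (by positivity)).mp h2

/-! ### phases -/

noncomputable def phase (z : ℂ) : ℂ := if z = 0 then 1 else z / ‖z‖

lemma norm_phase (z : ℂ) : ‖phase z‖ = 1 := by
  unfold phase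
  split
  · simp
  · rename_i h
    rw [norm_div, Complex.norm_real, Real.norm_of_nonneg (norm_nonneg z),
      div_self (norm_ne_zero_iff.2 h)]

lemma phase_mul_norm (z : ℂ) : phase z * (‖z‖ : ℂ) = z := by
  unfold phase
  split
  · simp [*]
  · rename_i h
    have : (‖z‖ : ℂ) ≠ 0 := by
      simpa using norm_ne_zero_iff.2 h
    field_simp

lemma mul_conj_phase (z : ℂ) : z * (starRingEnd ℂ) (phase z) = (‖z‖ : ℂ) := by
  unfold phase
  split
  · simp [*]
  · rename_i h
    have hz : (‖z‖ : ℂ) ≠ 0 := by simpa using norm_ne_zero_iff.2 h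
    rw [map_div₀, Complex.conj_ofReal]
    rw [div_eq_mul_inv, ← mul_assoc]
    rw [Complex.mul_conj]
    rw [Complex.normSq_eq_norm_sq]
    have h2 : ((‖z‖:ℝ) : ℂ) ≠ 0 := hz
    field_simp
    push_cast; ring

/-! ### the Dirac matrix -/

noncomputable def Dmat (w1 w2 w3 : ℝ) : Matrix (Fin 4) (Fin 4) ℂ :=
  !![0, ((w1⁻¹:ℝ):ℂ), 0, 0;
     ((w1⁻¹:ℝ):ℂ), 0, ((w2⁻¹:ℝ):ℂ), 0;
     0, ((w2⁻¹:ℝ):ℂ), 0, ((w3⁻¹:ℝ):ℂ);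
     0, 0, ((w3⁻¹:ℝ):ℂ), 0]

lemma mulVec_commD (w1 w2 w3 : ℝ) (a v : Fin 4 → ℂ) :
    (commD (Dmat w1 w2 w3) a).mulVec v
    = ![((w1⁻¹:ℝ):ℂ)*(a 1 - a 0)*(v 1),
        -(((w1⁻¹:ℝ):ℂ)*(a 1 - a 0))*(v 0) + ((w2⁻¹:ℝ):ℂ)*(a 2 - a 1)*(v 2),
        -(((w2⁻¹:ℝ):ℂ)*(a 2 - a 1))*(v 1) + ((w3⁻¹:ℝ):ℂ)*(a 3 - a 2)*(v 3),
        -(((w3⁻¹:ℝ):ℂ)*(a 3 - a 2))*(v 2)] := by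
  funext i
  fin_cases i <;>
    simp [Dmat, Matrix.mulVec, dotProduct, Fin.sum_univ_four, commD_apply,
      Matrix.cons_val_zero, Matrix.cons_val_one, Matrix.head_cons, Matrix.cons_val_two,
      Matrix.cons_val_three, Matrix.vecTail, Matrix.vecHead] <;>
    ring

/-! ### the upper-bound constraints -/

lemma constraints (w1 w2 w3 : ℝ) (hw1 : 0 < w1) (hw2 : 0 < w2) (hw3 : 0 < w3)
    (a : Fin 4 → ℂ) (ha : opNorm (commD (Dmat w1 w2 w3) a) ≤ 1) :
    ∃ t1 t2 t3 : ℝ, 0 ≤ t1 ∧ 0 ≤ t2 ∧ 0 ≤ t3 ∧ t1 ≤ 1 ∧ t3 ≤ 1 ∧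
      t2^2 ≤ (1-t1^2)*(1-t3^2) ∧ ‖a 0 - a 3‖ ≤ w1*(w1⁻¹*‖a 1 - a 0‖) + w2*(w2⁻¹*‖a 2 - a 1‖) + w3*(w3⁻¹*‖a 3 - a 2‖) ∧
      t1 = w1⁻¹*‖a 1 - a 0‖ ∧ t2 = w2⁻¹*‖a 2 - a 1‖ ∧ t3 = w3⁻¹*‖a 3 - a 2‖ := by
  have H1 : ∀ s β : ℝ, 0 ≤ s → 0 ≤ β →
      ((w1⁻¹*‖a 1 - a 0‖)*s + (w2⁻¹*‖a 2 - a 1‖)*β)^2 + ((w3⁻¹*‖a 3 - a 2‖)*β)^2 ≤ s^2 + β^2 := by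
    intro s β hs hβ
    have q := quad_of_opNorm_le_one _ ha
      ![(s:ℂ), 0, -((β:ℂ) * phase (a 1 - a 0) * (starRingEnd ℂ) (phase (a 2 - a 1))), 0]
    rw [mulVec_commD] at q
    simp only [Matrix.cons_val_zero, Matrix.cons_val_one, Matrix.head_cons,
      Matrix.cons_val_two, Matrix.cons_val_three, Matrix.vecTail, Matrix.vecHead,
      Matrix.cons_val_succ, add_zero, zero_add,
      Function.comp_apply, mul_zero, zero_mul, norm_zero, norm_neg] at q
    have p1 : phase (a 1 - a 0) * ((‖a 1 - a 0‖:ℝ):ℂ) = a 1 - a 0 := phase_mul_norm _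
    have p2 : (a 2 - a 1) * (starRingEnd ℂ) (phase (a 2 - a 1)) = ((‖a 2 - a 1‖:ℝ):ℂ) := mul_conj_phase _
    have E1val : -(((w1⁻¹:ℝ):ℂ) * (a 1 - a 0)) * (s:ℂ)
          + ((w2⁻¹:ℝ):ℂ) * (a 2 - a 1) * -((β:ℂ) * phase (a 1 - a 0) * (starRingEnd ℂ) (phase (a 2 - a 1)))
        = -(phase (a 1 - a 0) * (((w1⁻¹ * ‖a 1 - a 0‖ * s + w2⁻¹ * ‖a 2 - a 1‖ * β : ℝ)):ℂ)) := by
      push_cast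
      linear_combination ((s:ℂ)*((w1:ℂ))⁻¹)*p1 + (-(β:ℂ)*((w2:ℂ))⁻¹*(phase (a 1 - a 0)))*p2
    have E1 : ‖-(((w1⁻¹:ℝ):ℂ) * (a 1 - a 0)) * (s:ℂ)
          + ((w2⁻¹:ℝ):ℂ) * (a 2 - a 1) * -((β:ℂ) * phase (a 1 - a 0) * (starRingEnd ℂ) (phase (a 2 - a 1)))‖
        = w1⁻¹ * ‖a 1 - a 0‖ * s + w2⁻¹ * ‖a 2 - a 1‖ * β := by
      rw [E1val, norm_neg, norm_mul, norm_phase, one_mul, Complex.norm_real,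
        Real.norm_of_nonneg]
      exact add_nonneg (mul_nonneg (mul_nonneg (inv_nonneg.2 hw1.le) (norm_nonneg _)) hs)
        (mul_nonneg (mul_nonneg (inv_nonneg.2 hw2.le) (norm_nonneg _)) hβ)
    have E2 : ‖-(((w3⁻¹:ℝ):ℂ) * (a 3 - a 2)) * -((β:ℂ) * phase (a 1 - a 0) * (starRingEnd ℂ) (phase (a 2 - a 1)))‖
        = w3⁻¹ * ‖a 3 - a 2‖ * β := by
      simp only [norm_neg, norm_mul, norm_phase, RCLike.norm_conj, Complex.norm_real,
        Real.norm_eq_abs, abs_of_nonneg (inv_nonneg.2 hw3.le), abs_of_nonneg hβ, mul_one]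
    have E3 : ‖((s:ℝ):ℂ)‖ = s := by
      rw [Complex.norm_real, Real.norm_of_nonneg hs]
    have E4 : ‖(β:ℂ) * phase (a 1 - a 0) * (starRingEnd ℂ) (phase (a 2 - a 1))‖ = β := by
      simp only [norm_mul, norm_phase, RCLike.norm_conj, Complex.norm_real,
        Real.norm_eq_abs, abs_of_nonneg hβ, mul_one]
    rw [E1, E2, E3, E4] at q
    nlinarith [q]
  have H2 : ∀ s β : ℝ, 0 ≤ s → 0 ≤ β →
      ((w1⁻¹*‖a 1 - a 0‖)*s)^2 + ((w2⁻¹*‖a 2 - a 1‖)*s + (w3⁻¹*‖a 3 - a 2‖)*β)^2 ≤ s^2 + β^2 := by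
    intro s β hs hβ
    have q := quad_of_opNorm_le_one _ ha
      ![0, (s:ℂ), 0, -((β:ℂ) * phase (a 2 - a 1) * (starRingEnd ℂ) (phase (a 3 - a 2)))]
    rw [mulVec_commD] at q
    simp only [Matrix.cons_val_zero, Matrix.cons_val_one, Matrix.head_cons,
      Matrix.cons_val_two, Matrix.cons_val_three, Matrix.vecTail, Matrix.vecHead,
      Matrix.cons_val_succ, add_zero, zero_add,
      Function.comp_apply, mul_zero, zero_mul, norm_zero, norm_neg] at q
    have p2 : phase (a 2 - a 1) * ((‖a 2 - a 1‖:ℝ):ℂ) = a 2 - a 1 := phase_mul_norm _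
    have p3 : (a 3 - a 2) * (starRingEnd ℂ) (phase (a 3 - a 2)) = ((‖a 3 - a 2‖:ℝ):ℂ) := mul_conj_phase _
    have E1val : -(((w2⁻¹:ℝ):ℂ) * (a 2 - a 1)) * (s:ℂ)
          + ((w3⁻¹:ℝ):ℂ) * (a 3 - a 2) * -((β:ℂ) * phase (a 2 - a 1) * (starRingEnd ℂ) (phase (a 3 - a 2)))
        = -(phase (a 2 - a 1) * (((w2⁻¹ * ‖a 2 - a 1‖ * s + w3⁻¹ * ‖a 3 - a 2‖ * β : ℝ)):ℂ)) := by
      push_cast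
      linear_combination ((s:ℂ)*((w2:ℂ))⁻¹)*p2 + (-(β:ℂ)*((w3:ℂ))⁻¹*(phase (a 2 - a 1)))*p3
    have E1 : ‖-(((w2⁻¹:ℝ):ℂ) * (a 2 - a 1)) * (s:ℂ)
          + ((w3⁻¹:ℝ):ℂ) * (a 3 - a 2) * -((β:ℂ) * phase (a 2 - a 1) * (starRingEnd ℂ) (phase (a 3 - a 2)))‖
        = w2⁻¹ * ‖a 2 - a 1‖ * s + w3⁻¹ * ‖a 3 - a 2‖ * β := by
      rw [E1val, norm_neg, norm_mul, norm_phase, one_mul, Complex.norm_real,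
        Real.norm_of_nonneg]
      exact add_nonneg (mul_nonneg (mul_nonneg (inv_nonneg.2 hw2.le) (norm_nonneg _)) hs)
        (mul_nonneg (mul_nonneg (inv_nonneg.2 hw3.le) (norm_nonneg _)) hβ)
    have E0 : ‖((w1⁻¹:ℝ):ℂ) * (a 1 - a 0) * ((s:ℝ):ℂ)‖ = w1⁻¹ * ‖a 1 - a 0‖ * s := by
      simp only [norm_mul, Complex.norm_real, Real.norm_eq_abs,
        abs_of_nonneg (inv_nonneg.2 hw1.le), abs_of_nonneg hs]
    have E3 : ‖((s:ℝ):ℂ)‖ = s := by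
      rw [Complex.norm_real, Real.norm_of_nonneg hs]
    have E4 : ‖(β:ℂ) * phase (a 2 - a 1) * (starRingEnd ℂ) (phase (a 3 - a 2))‖ = β := by
      simp only [norm_mul, norm_phase, RCLike.norm_conj, Complex.norm_real,
        Real.norm_eq_abs, abs_of_nonneg hβ, mul_one]
    rw [E0, E1, E3, E4] at q
    nlinarith [q]
  set t1 := w1⁻¹*‖a 1 - a 0‖ with ht1def
  set t2 := w2⁻¹*‖a 2 - a 1‖ with ht2def
  set t3 := w3⁻¹*‖a 3 - a 2‖ with ht3def
  have ht1n : 0 ≤ t1 := mul_nonneg (inv_nonneg.2 hw1.le) (norm_nonneg _)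
  have ht2n : 0 ≤ t2 := mul_nonneg (inv_nonneg.2 hw2.le) (norm_nonneg _)
  have ht3n : 0 ≤ t3 := mul_nonneg (inv_nonneg.2 hw3.le) (norm_nonneg _)
  have hA : t1^2 + t2^2 ≤ 1 := by nlinarith [H2 1 0 zero_le_one le_rfl]
  have hC : t2^2 + t3^2 ≤ 1 := by nlinarith [H1 0 1 le_rfl zero_le_one]
  have ht1le : t1 ≤ 1 := by nlinarith
  have ht3le : t3 ≤ 1 := by nlinarith
  have hs13 : 0 ≤ t1*(1-t3^2) := mul_nonneg ht1n (by nlinarith)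
  have hB : t2^2 ≤ (1-t1^2)*(1-t3^2) :=
    keyB_aux t1 t2 t3 ht1n ht2n ht3n hA hC (H1 (t1*(1-t3^2)) t2 hs13 ht2n)
  have htri : ‖a 0 - a 3‖ ≤ w1*t1 + w2*t2 + w3*t3 := by
    have hsum : a 0 - a 3 = -((a 1 - a 0) + (a 2 - a 1) + (a 3 - a 2)) := by ring
    have e1 : w1*t1 = ‖a 1 - a 0‖ := by rw [ht1def]; field_simp
    have e2 : w2*t2 = ‖a 2 - a 1‖ := by rw [ht2def]; field_simp
    have e3 : w3*t3 = ‖a 3 - a 2‖ := by rw [ht3def]; field_simp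
    rw [hsum, norm_neg, e1, e2, e3]
    calc ‖(a 1 - a 0) + (a 2 - a 1) + (a 3 - a 2)‖
        ≤ ‖(a 1 - a 0) + (a 2 - a 1)‖ + ‖a 3 - a 2‖ := norm_add_le _ _
      _ ≤ ‖a 1 - a 0‖ + ‖a 2 - a 1‖ + ‖a 3 - a 2‖ := by
          have := norm_add_le (a 1 - a 0) (a 2 - a 1)
          linarith
  exact ⟨t1, t2, t3, ht1n, ht2n, ht3n, ht1le, ht3le, hB, htri, rfl, rfl, rfl⟩

lemma witness_quad (w1 w2 w3 : ℝ) (hw1 : 0 < w1) (hw2 : 0 < w2) (hw3 : 0 < w3)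
    (t1 t2 t3 : ℝ) (h1 : 0 ≤ t1) (h2 : 0 ≤ t2) (h3 : 0 ≤ t3)
    (hkey : ∀ r0 r1 r2 r3 : ℝ, 0 ≤ r0 → 0 ≤ r1 → 0 ≤ r2 → 0 ≤ r3 →
      t1^2*r1^2 + (t1*r0 + t2*r2)^2 + (t2*r1 + t3*r3)^2 + t3^2*r2^2 ≤ r0^2+r1^2+r2^2+r3^2) :
    opNorm (commD (Dmat w1 w2 w3)
      ![0, ((w1*t1:ℝ):ℂ), (((w1*t1+w2*t2):ℝ):ℂ), (((w1*t1+w2*t2+w3*t3):ℝ):ℂ)]) ≤ 1 := by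
  apply opNorm_le_one_of
  intro v
  rw [mulVec_commD]
  simp only [Matrix.cons_val_zero, Matrix.cons_val_one, Matrix.head_cons,
    Matrix.cons_val_two, Matrix.cons_val_three, Matrix.vecTail, Matrix.vecHead,
    Matrix.cons_val_succ, sub_zero, zero_sub, Function.comp_apply] at *
  have hw1c : (w1:ℂ) ≠ 0 := Complex.ofReal_ne_zero.2 hw1.ne'
  have hw2c : (w2:ℂ) ≠ 0 := Complex.ofReal_ne_zero.2 hw2.ne'
  have hw3c : (w3:ℂ) ≠ 0 := Complex.ofReal_ne_zero.2 hw3.ne'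
  have c1e : ((w1⁻¹:ℝ):ℂ) * ((w1*t1:ℝ):ℂ) = ((t1:ℝ):ℂ) := by
    push_cast; field_simp
  have c2e : ((w2⁻¹:ℝ):ℂ) * ((((w1*t1+w2*t2):ℝ):ℂ) - ((w1*t1:ℝ):ℂ)) = ((t2:ℝ):ℂ) := by
    push_cast; field_simp; ring
  have c3e : ((w3⁻¹:ℝ):ℂ) * ((((w1*t1+w2*t2+w3*t3):ℝ):ℂ) - (((w1*t1+w2*t2):ℝ):ℂ)) = ((t3:ℝ):ℂ) := by
    push_cast; field_simp; ring
  rw [c1e, c2e, c3e]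
  have n0 : ‖((t1:ℝ):ℂ) * v 1‖ = t1 * ‖v 1‖ := by
    rw [norm_mul, Complex.norm_real, Real.norm_of_nonneg h1]
  have n3 : ‖-((t3:ℝ):ℂ) * v 2‖ = t3 * ‖v 2‖ := by
    rw [norm_mul, norm_neg, Complex.norm_real, Real.norm_of_nonneg h3]
  have n1 : ‖-((t1:ℝ):ℂ) * v 0 + ((t2:ℝ):ℂ) * v 2‖ ≤ t1 * ‖v 0‖ + t2 * ‖v 2‖ := by
    refine le_trans (norm_add_le _ _) ?_
    rw [norm_mul, norm_mul, norm_neg, Complex.norm_real, Complex.norm_real,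
      Real.norm_of_nonneg h1, Real.norm_of_nonneg h2]
  have n2 : ‖-((t2:ℝ):ℂ) * v 1 + ((t3:ℝ):ℂ) * v 3‖ ≤ t2 * ‖v 1‖ + t3 * ‖v 3‖ := by
    refine le_trans (norm_add_le _ _) ?_
    rw [norm_mul, norm_mul, norm_neg, Complex.norm_real, Complex.norm_real,
      Real.norm_of_nonneg h2, Real.norm_of_nonneg h3]
  have s1 : ‖-((t1:ℝ):ℂ) * v 0 + ((t2:ℝ):ℂ) * v 2‖^2 ≤ (t1 * ‖v 0‖ + t2 * ‖v 2‖)^2 :=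
    pow_le_pow_left₀ (norm_nonneg _) n1 2
  have s2 : ‖-((t2:ℝ):ℂ) * v 1 + ((t3:ℝ):ℂ) * v 3‖^2 ≤ (t2 * ‖v 1‖ + t3 * ‖v 3‖)^2 :=
    pow_le_pow_left₀ (norm_nonneg _) n2 2
  have k := hkey ‖v 0‖ ‖v 1‖ ‖v 2‖ ‖v 3‖ (norm_nonneg _) (norm_nonneg _) (norm_nonneg _) (norm_nonneg _)
  rw [n0, n3]
  nlinarith [k, s1, s2]


lemma wit1 (w1 w2 w3 r0 r1 r2 r3 : ℝ) (hw1 : 0 < w1) (hw2 : 0 < w2) (hw3 : 0 < w3)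
    (hw : w1*w3 ≤ w2^2) :
    ((w1 * Real.sqrt (w3^2+w2^2) / (w2 * Real.sqrt (w1^2+w2^2)))^2*r1^2
    + ((w1 * Real.sqrt (w3^2+w2^2) / (w2 * Real.sqrt (w1^2+w2^2)))*r0
        + ((w2^4-w1^2*w3^2)/(w2^2 * Real.sqrt (w1^2+w2^2) * Real.sqrt (w3^2+w2^2)))*r2)^2
    + (((w2^4-w1^2*w3^2)/(w2^2 * Real.sqrt (w1^2+w2^2) * Real.sqrt (w3^2+w2^2)))*r1
        + (w3 * Real.sqrt (w1^2+w2^2) / (w2 * Real.sqrt (w3^2+w2^2)))*r3)^2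
    + (w3 * Real.sqrt (w1^2+w2^2) / (w2 * Real.sqrt (w3^2+w2^2)))^2*r2^2)
    ≤ r0^2 + r1^2 + r2^2 + r3^2 := by
  set P := Real.sqrt (w1^2+w2^2) with hP
  set Q := Real.sqrt (w3^2+w2^2) with hQ
  have hP0 : 0 < P := Real.sqrt_pos.2 (by positivity)
  have hQ0 : 0 < Q := Real.sqrt_pos.2 (by positivity)
  have hP2 : P^2 = w1^2+w2^2 := Real.sq_sqrt (by positivity)
  have hQ2 : Q^2 = w3^2+w2^2 := Real.sq_sqrt (by positivity)
  set t1 := w1 * Q / (w2 * P) with ht1def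
  set t2 := (w2^4-w1^2*w3^2)/(w2^2 * P * Q) with ht2def
  set t3 := w3 * P / (w2 * Q) with ht3def
  have hA : (0:ℝ) < w1^2+w2^2 := by positivity
  have hB : (0:ℝ) < w3^2+w2^2 := by positivity
  have ht1 : w2^2*(w1^2+w2^2) * t1^2 = w1^2*(w3^2+w2^2) := by
    have : t1^2 = w1^2*(w3^2+w2^2)/(w2^2*(w1^2+w2^2)) := by
      rw [ht1def, div_pow, mul_pow, mul_pow, hP2, hQ2]
    rw [this]; field_simp
  have ht3 : w2^2*(w3^2+w2^2) * t3^2 = w3^2*(w1^2+w2^2) := by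
    have : t3^2 = w3^2*(w1^2+w2^2)/(w2^2*(w3^2+w2^2)) := by
      rw [ht3def, div_pow, mul_pow, mul_pow, hP2, hQ2]
    rw [this]; field_simp
  have ht2 : (w2^4*(w1^2+w2^2)*(w3^2+w2^2)) * t2^2 = (w2^4-w1^2*w3^2)^2 := by
    have : t2^2 = (w2^4-w1^2*w3^2)^2/(w2^4*((w1^2+w2^2)*(w3^2+w2^2))) := by
      rw [ht2def, div_pow, mul_pow, mul_pow, hP2, hQ2]; ring_nf
    rw [this]; field_simp
  have hPne : P ≠ 0 := hP0.ne'
  have hQne : Q ≠ 0 := hQ0.ne'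
  have hw2ne : w2 ≠ 0 := hw2.ne'
  have ht12 : (w2^3*(w1^2+w2^2)) * (t1*t2) = w1*(w2^4-w1^2*w3^2) := by
    have h12 : t1*t2 = w1*(w2^4-w1^2*w3^2)/(w2^3*P^2) := by
      rw [ht1def, ht2def]; field_simp
    rw [h12, hP2]; field_simp
  have ht23 : (w2^3*(w3^2+w2^2)) * (t2*t3) = w3*(w2^4-w1^2*w3^2) := by
    have h23 : t2*t3 = w3*(w2^4-w1^2*w3^2)/(w2^3*Q^2) := by
      rw [ht2def, ht3def]; field_simp
    rw [h23, hQ2]; field_simp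
  have main : (w2^4*(w1^2+w2^2)*(w3^2+w2^2)) * ((r0^2+r1^2+r2^2+r3^2)
      - (t1^2*r1^2 + (t1*r0+t2*r2)^2 + (t2*r1+t3*r3)^2 + t3^2*r2^2))
      = (w3^2+w2^2)*(w2^4-w1^2*w3^2)*(w2*r0-w1*r2)^2
        + (w1^2+w2^2)*(w2^4-w1^2*w3^2)*(w3*r1-w2*r3)^2 := by
    linear_combination (-(w3^2+w2^2)*w2^2*(r0^2+r1^2))*ht1
      + (-(w3^2+w2^2)*w2*(2*r0*r2))*ht12
      + (-(r1^2+r2^2))*ht2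
      + (-(w1^2+w2^2)*w2*(2*r1*r3))*ht23
      + (-(w1^2+w2^2)*w2^2*(r2^2+r3^2))*ht3
  have hden : (0:ℝ) < w2^4*(w1^2+w2^2)*(w3^2+w2^2) := by positivity
  have hR2 : (0:ℝ) ≤ w2^4 - w1^2*w3^2 := by nlinarith [mul_pos hw1 hw3]
  have h9 : (0:ℝ) ≤ (w2^4*(w1^2+w2^2)*(w3^2+w2^2)) * ((r0^2+r1^2+r2^2+r3^2)
      - (t1^2*r1^2 + (t1*r0+t2*r2)^2 + (t2*r1+t3*r3)^2 + t3^2*r2^2)) := by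
    rw [main]
    exact add_nonneg (mul_nonneg (mul_nonneg hB.le hR2) (sq_nonneg (w2*r0-w1*r2)))
      (mul_nonneg (mul_nonneg hA.le hR2) (sq_nonneg (w3*r1-w2*r3)))
  have h10 := (mul_nonneg_iff_of_pos_left hden).mp h9
  linarith

lemma wit1_val (w1 w2 w3 : ℝ) (hw1 : 0 < w1) (hw2 : 0 < w2) (hw3 : 0 < w3) :
    w1*(w1 * Real.sqrt (w3^2+w2^2) / (w2 * Real.sqrt (w1^2+w2^2)))
    + w2*((w2^4-w1^2*w3^2)/(w2^2 * Real.sqrt (w1^2+w2^2) * Real.sqrt (w3^2+w2^2)))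
    + w3*(w3 * Real.sqrt (w1^2+w2^2) / (w2 * Real.sqrt (w3^2+w2^2)))
    = Real.sqrt (w1^2+w2^2) * Real.sqrt (w3^2+w2^2) / w2 := by
  set P := Real.sqrt (w1^2+w2^2) with hP
  set Q := Real.sqrt (w3^2+w2^2) with hQ
  have hP0 : 0 < P := Real.sqrt_pos.2 (by positivity)
  have hQ0 : 0 < Q := Real.sqrt_pos.2 (by positivity)
  have hP2 : P^2 = w1^2+w2^2 := Real.sq_sqrt (by positivity)
  have hQ2 : Q^2 = w3^2+w2^2 := Real.sq_sqrt (by positivity)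
  have hne : w2*(P*Q) ≠ 0 := by positivity
  have e1 : w1*(w1*Q/(w2*P)) * (w2*(P*Q)) = w1^2*Q^2 := by field_simp
  have e2 : w2*((w2^4-w1^2*w3^2)/(w2^2*P*Q)) * (w2*(P*Q)) = w2^4-w1^2*w3^2 := by
    field_simp
  have e3 : w3*(w3*P/(w2*Q)) * (w2*(P*Q)) = w3^2*P^2 := by field_simp
  have e4 : (P*Q/w2) * (w2*(P*Q)) = P^2*Q^2 := by field_simp
  refine mul_right_cancel₀ hne ?_
  rw [add_mul, add_mul, e1, e2, e3, e4, hP2, hQ2]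
  ring

theorem stmt11 (w₁ w₂ w₃ : ℝ) (h1 : 0 < w₁) (h2 : 0 < w₂) (h3 : 0 < w₃) :
    (w₂ > Real.sqrt (w₁ * w₃) →
      ncDist !![0, ((w₁⁻¹ : ℝ) : ℂ), 0, 0;
                ((w₁⁻¹ : ℝ) : ℂ), 0, ((w₂⁻¹ : ℝ) : ℂ), 0;
                0, ((w₂⁻¹ : ℝ) : ℂ), 0, ((w₃⁻¹ : ℝ) : ℂ);
                0, 0, ((w₃⁻¹ : ℝ) : ℂ), 0] 0 3 =
        ENNReal.ofReal (Real.sqrt (w₁ ^ 2 + w₂ ^ 2) * Real.sqrt (w₃ ^ 2 + w₂ ^ 2) / w₂)) ∧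
    (w₂ ≤ Real.sqrt (w₁ * w₃) →
      ncDist !![0, ((w₁⁻¹ : ℝ) : ℂ), 0, 0;
                ((w₁⁻¹ : ℝ) : ℂ), 0, ((w₂⁻¹ : ℝ) : ℂ), 0;
                0, ((w₂⁻¹ : ℝ) : ℂ), 0, ((w₃⁻¹ : ℝ) : ℂ);
                0, 0, ((w₃⁻¹ : ℝ) : ℂ), 0] 0 3 =
        ENNReal.ofReal (w₁ + w₃)) := by
  have hPn : (0:ℝ) ≤ Real.sqrt (w₁^2+w₂^2) := Real.sqrt_nonneg _
  have hQn : (0:ℝ) ≤ Real.sqrt (w₃^2+w₂^2) := Real.sqrt_nonneg _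
  constructor
  · -- case 1
    intro hgt
    have hw : w₁*w₃ < w₂^2 := by
      nlinarith [Real.sq_sqrt (mul_nonneg h1.le h3.le), Real.sqrt_nonneg (w₁*w₃), hgt]
    have hw4 : (0:ℝ) ≤ w₂^4 - w₁^2*w₃^2 := by nlinarith [mul_pos h1 h3]
    show ncDist (Dmat w₁ w₂ w₃) 0 3 = _
    unfold ncDist
    apply le_antisymm
    · refine iSup_le fun a => iSup_le fun ha => ?_
      obtain ⟨t1, t2, t3, n1, n2, n3, le1, le3, hB, htri, e1, e2, e3⟩ :=
        constraints w₁ w₂ w₃ h1 h2 h3 a ha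
      rw [← e1, ← e2, ← e3] at htri
      exact ENNReal.ofReal_le_ofReal (le_trans htri
        (key1_aux w₁ w₂ w₃ t1 t2 t3 h1 h2 h3 n1 n2 n3 le1 le3 hB))
    · set T1 := w₁ * Real.sqrt (w₃^2+w₂^2) / (w₂ * Real.sqrt (w₁^2+w₂^2)) with hT1
      set T2 := (w₂^4-w₁^2*w₃^2)/(w₂^2 * Real.sqrt (w₁^2+w₂^2) * Real.sqrt (w₃^2+w₂^2)) with hT2
      set T3 := w₃ * Real.sqrt (w₁^2+w₂^2) / (w₂ * Real.sqrt (w₃^2+w₂^2)) with hT3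
      have hT1n : 0 ≤ T1 := div_nonneg (mul_nonneg h1.le hQn) (mul_nonneg h2.le hPn)
      have hT2n : 0 ≤ T2 := div_nonneg hw4 (mul_nonneg (mul_nonneg (sq_nonneg w₂) hPn) hQn)
      have hT3n : 0 ≤ T3 := div_nonneg (mul_nonneg h3.le hPn) (mul_nonneg h2.le hQn)
      have hOp := witness_quad w₁ w₂ w₃ h1 h2 h3 T1 T2 T3 hT1n hT2n hT3n
        (fun r0 r1 r2 r3 _ _ _ _ => wit1 w₁ w₂ w₃ r0 r1 r2 r3 h1 h2 h3 hw.le)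
      set aw : Fin 4 → ℂ :=
        ![0, ((w₁*T1:ℝ):ℂ), (((w₁*T1+w₂*T2):ℝ):ℂ), (((w₁*T1+w₂*T2+w₃*T3):ℝ):ℂ)] with haw
      have hval : w₁*T1+w₂*T2+w₃*T3
          = Real.sqrt (w₁^2+w₂^2) * Real.sqrt (w₃^2+w₂^2) / w₂ :=
        wit1_val w₁ w₂ w₃ h1 h2 h3
      have hnorm : ‖aw 0 - aw 3‖ = Real.sqrt (w₁^2+w₂^2) * Real.sqrt (w₃^2+w₂^2) / w₂ := by
        rw [haw]
        simp only [Matrix.cons_val_zero, Matrix.cons_val_three, Matrix.vecTail, Matrix.vecHead,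
          Matrix.cons_val_succ, Function.comp_apply]
        rw [zero_sub, norm_neg, Complex.norm_real, Real.norm_of_nonneg (by
          exact add_nonneg (add_nonneg (mul_nonneg h1.le hT1n) (mul_nonneg h2.le hT2n))
            (mul_nonneg h3.le hT3n))]
        exact hval
      calc ENNReal.ofReal (Real.sqrt (w₁^2+w₂^2) * Real.sqrt (w₃^2+w₂^2) / w₂)
          = ENNReal.ofReal ‖aw 0 - aw 3‖ := by rw [hnorm]
        _ ≤ _ := le_iSup₂ (f := fun (a : Fin 4 → ℂ)
            (_ : opNorm (commD (Dmat w₁ w₂ w₃) a) ≤ 1) => ENNReal.ofReal ‖a 0 - a 3‖) aw hOp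
  · -- case 2
    intro hle
    have hw : w₂^2 ≤ w₁*w₃ := by
      nlinarith [Real.sq_sqrt (mul_nonneg h1.le h3.le), Real.sqrt_nonneg (w₁*w₃), hle, h2]
    show ncDist (Dmat w₁ w₂ w₃) 0 3 = _
    unfold ncDist
    apply le_antisymm
    · refine iSup_le fun a => iSup_le fun ha => ?_
      obtain ⟨t1, t2, t3, n1, n2, n3, le1, le3, hB, htri, e1, e2, e3⟩ :=
        constraints w₁ w₂ w₃ h1 h2 h3 a ha
      rw [← e1, ← e2, ← e3] at htri
      exact ENNReal.ofReal_le_ofReal (le_trans htri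
        (key2_aux w₁ w₂ w₃ t1 t2 t3 h1 h2 h3 n1 n2 n3 le1 le3 hB hw))
    · have hOp := witness_quad w₁ w₂ w₃ h1 h2 h3 1 0 1 zero_le_one le_rfl zero_le_one
        (fun r0 r1 r2 r3 _ _ _ _ => by nlinarith)
      set aw : Fin 4 → ℂ :=
        ![0, ((w₁*1:ℝ):ℂ), (((w₁*1+w₂*0):ℝ):ℂ), (((w₁*1+w₂*0+w₃*1):ℝ):ℂ)] with haw
      have hnorm : ‖aw 0 - aw 3‖ = w₁ + w₃ := by
        rw [haw]
        simp only [Matrix.cons_val_zero, Matrix.cons_val_three, Matrix.vecTail, Matrix.vecHead,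
          Matrix.cons_val_succ, Function.comp_apply]
        rw [zero_sub, norm_neg, Complex.norm_real, Real.norm_of_nonneg (by nlinarith)]
        ring
      calc ENNReal.ofReal (w₁ + w₃)
          = ENNReal.ofReal ‖aw 0 - aw 3‖ := by rw [hnorm]
        _ ≤ _ := le_iSup₂ (f := fun (a : Fin 4 → ℂ)
            (_ : opNorm (commD (Dmat w₁ w₂ w₃) a) ≤ 1) => ENNReal.ofReal ‖a 0 - a 3‖) aw hOp
end Aux
end

section
/- Let D be a Hermitian Dirac operator with zero diagonal on n vertices whose graph G_D is connected, let Δ(i) denote the degree of vertex i in G_D, let Δ = diag(Δ(1),…,Δ(n)), let Δ(G) = max_i Δ(i) be the maximal degree, and set D_Δ = Δ^{−1/2} D Δ^{−1/2}. Then for all vertices i, j: ℓ^D(i,j) ≤ d^{D_Δ}(i,j) ≤ Δ(G)·d^D(i,j). In particular ℓ^D(i,j)/Δ(G) ≤ d^D(i,j). -/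
open scoped ENNReal

/-- The degree of the vertex `i` in the graph `G_D`. -/
noncomputable def degD {n : ℕ} (D : Matrix (Fin n) (Fin n) ℂ) (i : Fin n) : ℕ :=
  letI : DecidablePred (Adjac D i) := Classical.decPred _
  (Finset.univ.filter fun j => Adjac D i j).card

/-- The maximal degree `Δ(G_D)`. -/
noncomputable def maxDeg {n : ℕ} (D : Matrix (Fin n) (Fin n) ℂ) : ℕ :=
  Finset.univ.sup (degD D)

/-- `D_Δ = Δ^{-1/2} D Δ^{-1/2}` where `Δ` is the diagonal matrix of degrees. -/
noncomputable def DDelta {n : ℕ} (D : Matrix (Fin n) (Fin n) ℂ) : Matrix (Fin n) (Fin n) ℂ :=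
  Matrix.diagonal (fun i => (((Real.sqrt (degD D i))⁻¹ : ℝ) : ℂ)) * D *
    Matrix.diagonal (fun i => (((Real.sqrt (degD D i))⁻¹ : ℝ) : ℂ))

/-! ### Auxiliary lemmas on the operator norm -/

lemma opNorm_def' {n : ℕ} (M : Matrix (Fin n) (Fin n) ℂ) :
    opNorm M = ‖Matrix.toEuclideanCLM (𝕜 := ℂ) M‖ := by
  unfold opNorm; congr!

lemma opNorm_nonneg' {n : ℕ} (M : Matrix (Fin n) (Fin n) ℂ) : 0 ≤ opNorm M := by
  rw [opNorm_def']; exact norm_nonneg _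

lemma opNorm_mul_le' {n : ℕ} (A B : Matrix (Fin n) (Fin n) ℂ) :
    opNorm (A * B) ≤ opNorm A * opNorm B := by
  simp only [opNorm_def', map_mul]
  exact norm_mul_le _ _

set_option synthInstance.maxHeartbeats 1000000 in
lemma opNorm_smul' {n : ℕ} (c : ℂ) (M : Matrix (Fin n) (Fin n) ℂ) :
    opNorm (c • M) = ‖c‖ * opNorm M := by
  simp only [opNorm_def', map_smul]
  exact norm_smul c (Matrix.toEuclideanCLM (𝕜 := ℂ) M)

lemma opNorm_le_bound' {n : ℕ} {M : Matrix (Fin n) (Fin n) ℂ} {C : ℝ} (hC : 0 ≤ C)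
    (h : ∀ x : Fin n → ℂ, ∑ u, ‖∑ v, M u v * x v‖^2 ≤ C^2 * ∑ v, ‖x v‖^2) :
    opNorm M ≤ C := by
  rw [opNorm_def']
  refine ContinuousLinearMap.opNorm_le_bound _ hC fun x => ?_
  have hx : ‖x‖^2 = ∑ v, ‖x v‖^2 := by
    rw [EuclideanSpace.norm_eq,
      Real.sq_sqrt (Finset.sum_nonneg fun _ _ => sq_nonneg _)]
  have happ : ∀ u, (Matrix.toEuclideanCLM (𝕜 := ℂ) M x) u = ∑ v, M u v * x v := by
    intro u
    have h2 := congrFun (Matrix.ofLp_toEuclideanCLM (𝕜 := ℂ) M x) u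
    simpa [Matrix.toLin'_apply, Matrix.mulVec, dotProduct] using h2
  have hy : ‖(Matrix.toEuclideanCLM (𝕜 := ℂ) M x)‖^2 = ∑ u, ‖∑ v, M u v * x v‖^2 := by
    rw [EuclideanSpace.norm_eq,
      Real.sq_sqrt (Finset.sum_nonneg fun _ _ => sq_nonneg _)]
    simp only [happ]
  have h1 : ‖Matrix.toEuclideanCLM (𝕜 := ℂ) M x‖^2 ≤ (C * ‖x‖)^2 := by
    rw [hy, mul_pow, hx]; exact h _
  exact (pow_le_pow_iff_left₀ (norm_nonneg _) (mul_nonneg hC (norm_nonneg _)) two_ne_zero).mp h1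

/-- The Schur test, specialized to weight one. -/
lemma schur' {n : ℕ} (M : Matrix (Fin n) (Fin n) ℂ) (p : Fin n → ℝ) (hp : ∀ u, 0 < p u)
    (hrow : ∀ u, ∑ v, ‖M u v‖ * p v ≤ p u)
    (hcol : ∀ v, ∑ u, ‖M u v‖ * p u ≤ p v)
    (x : Fin n → ℂ) :
    ∑ u, ‖∑ v, M u v * x v‖^2 ≤ (1:ℝ)^2 * ∑ v, ‖x v‖^2 := by
  rw [one_pow, one_mul]
  have key : ∀ u, ‖∑ v, M u v * x v‖^2 ≤ p u * ∑ v, ‖M u v‖ * (‖x v‖^2 / p v) := by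
    intro u
    have h1 : ‖∑ v, M u v * x v‖ ≤ ∑ v, ‖M u v‖ * ‖x v‖ := by
      refine (norm_sum_le _ _).trans ?_
      exact Finset.sum_le_sum fun v _ => by rw [norm_mul]
    have h2 : ‖∑ v, M u v * x v‖^2 ≤ (∑ v, ‖M u v‖ * ‖x v‖)^2 :=
      pow_le_pow_left₀ (norm_nonneg _) h1 2
    refine h2.trans ?_
    have hfg : ∀ v, ‖M u v‖ * ‖x v‖ =
        (Real.sqrt (‖M u v‖ * p v)) * (Real.sqrt (‖M u v‖ / p v) * ‖x v‖) := by
      intro v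
      rw [← mul_assoc, ← Real.sqrt_mul (mul_nonneg (norm_nonneg _) (hp v).le)]
      have he : ‖M u v‖ * p v * (‖M u v‖ / p v) = ‖M u v‖^2 := by
        field_simp [(hp v).ne']
      rw [he, Real.sqrt_sq (norm_nonneg _)]
    have hcs := Finset.sum_mul_sq_le_sq_mul_sq Finset.univ
      (fun v => Real.sqrt (‖M u v‖ * p v)) (fun v => Real.sqrt (‖M u v‖ / p v) * ‖x v‖)
    simp only [← hfg] at hcs
    refine hcs.trans ?_
    have e1 : ∑ v, Real.sqrt (‖M u v‖ * p v)^2 = ∑ v, ‖M u v‖ * p v :=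
      Finset.sum_congr rfl fun v _ =>
        Real.sq_sqrt (mul_nonneg (norm_nonneg _) (hp v).le)
    have e2 : ∑ v, (Real.sqrt (‖M u v‖ / p v) * ‖x v‖)^2
        = ∑ v, ‖M u v‖ * (‖x v‖^2 / p v) := by
      refine Finset.sum_congr rfl fun v _ => ?_
      rw [mul_pow, Real.sq_sqrt (div_nonneg (norm_nonneg _) (hp v).le)]
      field_simp
    rw [e1, e2]
    have h3 : 0 ≤ ∑ v, ‖M u v‖ * (‖x v‖^2 / p v) :=
      Finset.sum_nonneg fun v _ =>
        mul_nonneg (norm_nonneg _) (div_nonneg (sq_nonneg _) (hp v).le)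
    exact mul_le_mul_of_nonneg_right (hrow u) h3
  calc ∑ u, ‖∑ v, M u v * x v‖^2
      ≤ ∑ u, p u * ∑ v, ‖M u v‖ * (‖x v‖^2 / p v) :=
        Finset.sum_le_sum fun u _ => key u
    _ = ∑ v, (‖x v‖^2 / p v) * ∑ u, ‖M u v‖ * p u := by
        simp only [Finset.mul_sum]
        rw [Finset.sum_comm]
        exact Finset.sum_congr rfl fun v _ => Finset.sum_congr rfl fun u _ => by ring
    _ ≤ ∑ v, (‖x v‖^2 / p v) * p v :=
        Finset.sum_le_sum fun v _ => mul_le_mul_of_nonneg_left (hcol v)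
          (div_nonneg (sq_nonneg _) (hp v).le)
    _ = ∑ v, ‖x v‖^2 :=
        Finset.sum_congr rfl fun v _ => div_mul_cancel₀ _ (hp v).ne'

lemma opNorm_diagonal_le' {n : ℕ} (d : Fin n → ℂ) {C : ℝ} (hC : 0 ≤ C)
    (h : ∀ u, ‖d u‖ ≤ C) : opNorm (Matrix.diagonal d) ≤ C := by
  refine opNorm_le_bound' hC fun x => ?_
  have hsum : ∀ u, ∑ v, Matrix.diagonal d u v * x v = d u * x u := by
    intro u
    rw [Finset.sum_eq_single u]
    · rw [Matrix.diagonal_apply_eq]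
    · intro v _ hv
      rw [Matrix.diagonal_apply_ne _ (Ne.symm hv), zero_mul]
    · simp
  simp only [hsum]
  rw [Finset.mul_sum]
  refine Finset.sum_le_sum fun u _ => ?_
  rw [norm_mul, mul_pow]
  exact mul_le_mul_of_nonneg_right (pow_le_pow_left₀ (norm_nonneg _) (h u) 2) (sq_nonneg _)

/-! ### Entry lemmas -/

lemma commD_apply' {n : ℕ} (X : Matrix (Fin n) (Fin n) ℂ) (a : Fin n → ℂ) (u v : Fin n) :
    commD X a u v = X u v * (a v - a u) := by
  unfold commD
  simp [Matrix.mul_diagonal, Matrix.diagonal_mul, Matrix.sub_apply]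
  ring

lemma commD_smul' {n : ℕ} (X : Matrix (Fin n) (Fin n) ℂ) (c : ℂ) (a : Fin n → ℂ) :
    commD X (c • a) = c • commD X a := by
  ext u v
  simp only [commD_apply', Matrix.smul_apply, Pi.smul_apply, smul_eq_mul]
  ring

lemma DDelta_apply' {n : ℕ} (D : Matrix (Fin n) (Fin n) ℂ) (u v : Fin n) :
    DDelta D u v = (((Real.sqrt (degD D u))⁻¹ : ℝ) : ℂ) * D u v *
      (((Real.sqrt (degD D v))⁻¹ : ℝ) : ℂ) := by
  unfold DDelta
  rw [Matrix.mul_diagonal, Matrix.diagonal_mul]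

/-! ### Walk lemmas -/

section Walks

variable {ι : Type*} {D : Matrix ι ι ℂ}

lemma eWeight_ne_top' {u v : ι} (h : D u v ≠ 0) : eWeight D u v ≠ ∞ := by
  simp only [eWeight, ne_eq, ENNReal.inv_eq_top]
  exact (ENNReal.ofReal_pos.mpr (norm_pos_iff.mpr h)).ne'

lemma eWeight_toReal' {u v : ι} (h : D u v ≠ 0) : (eWeight D u v).toReal = ‖D u v‖⁻¹ := by
  rw [eWeight, ENNReal.toReal_inv, ENNReal.toReal_ofReal (norm_nonneg _)]

lemma gDist_le_walkLength' {i j : ι} {p : List ι} (h : IsWalk D i j p) :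
    gDist D i j ≤ walkLength D i p :=
  iInf₂_le p h

lemma isWalk_nil' (i : ι) : IsWalk D i i [] := ⟨List.Chain.nil, rfl⟩

lemma gDist_self' (i : ι) : gDist D i i = 0 :=
  le_antisymm (gDist_le_walkLength' (isWalk_nil' i)) zero_le

lemma walkLength_append' (w : ι) : ∀ (p : List ι) (u : ι),
    walkLength D u (p ++ [w]) =
      walkLength D u p + eWeight D ((u :: p).getLast (List.cons_ne_nil _ _)) w
  | [], u => by simp [walkLength]
  | v :: rest, u => by
    show eWeight D u v + walkLength D v (rest ++ [w]) = _
    rw [walkLength_append' w rest v, ← add_assoc]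
    rfl

lemma isWalk_append' {i u v : ι} {p : List ι} (h : IsWalk D i u p) (hadj : Adjac D u v) :
    IsWalk D i v (p ++ [v]) := by
  induction p generalizing i with
  | nil =>
    obtain ⟨-, h2⟩ := h
    simp only [List.getLast_singleton] at h2
    subst h2
    exact ⟨List.chain_cons.mpr ⟨hadj, List.Chain.nil⟩, by simp⟩
  | cons w rest ih =>
    obtain ⟨h1, h2⟩ := h
    dsimp only [List.Chain] at h1
    rw [List.chain_cons] at h1
    have h2' : ((w :: rest).getLast (List.cons_ne_nil _ _)) = u := by
      rwa [List.getLast_cons (List.cons_ne_nil _ _)] at h2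
    have hiw := ih ⟨h1.2, h2'⟩
    refine ⟨List.chain_cons.mpr ⟨h1.1, hiw.1⟩, ?_⟩
    rw [List.getLast_cons (by simp)]
    exact hiw.2

lemma gDist_triangle_edge' {i u v : ι} (hadj : Adjac D u v) :
    gDist D i v ≤ gDist D i u + eWeight D u v := by
  have hrw : gDist D i u + eWeight D u v
      = ⨅ p, ⨅ (_ : IsWalk D i u p), (walkLength D i p + eWeight D u v) := by
    rw [gDist, ENNReal.iInf_add]
    exact iInf_congr fun p => ENNReal.iInf_add
  rw [hrw]
  refine le_iInf fun p => le_iInf fun hp => ?_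
  have hw := isWalk_append' hp hadj
  refine (gDist_le_walkLength' hw).trans_eq ?_
  rw [walkLength_append', hp.2]

lemma walkLength_ne_top' : ∀ (p : List ι) (u : ι), List.Chain (Adjac D) u p →
    walkLength D u p ≠ ∞
  | [], _, _ => by simp [walkLength]
  | v :: rest, u, h => by
    dsimp only [List.Chain] at h
    rw [List.chain_cons] at h
    simp only [walkLength, ne_eq, ENNReal.add_eq_top, not_or]
    exact ⟨eWeight_ne_top' h.1.2, walkLength_ne_top' rest v h.2⟩

lemma gDist_ne_top' {i j : ι} (h : Conn D i j) : gDist D i j ≠ ∞ := by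
  obtain ⟨p, hp⟩ := h
  exact ne_top_of_le_ne_top (walkLength_ne_top' p i hp.1) (gDist_le_walkLength' hp)

end Walks

lemma ncDist_self' {ι : Type*} [Finite ι] (X : Matrix ι ι ℂ) (i : ι) : ncDist X i i = 0 := by
  refine le_antisymm (iSup₂_le fun a _ => ?_) zero_le
  simp

theorem stmt16 {n : ℕ} (D : Matrix (Fin n) (Fin n) ℂ)
    (hherm : D.IsHermitian) (hdiag : ∀ i, D i i = 0)
    (hconn : ∀ x y, Conn D x y) (i j : Fin n) :
    gDist D i j ≤ ncDist (DDelta D) i j ∧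
    ncDist (DDelta D) i j ≤ (maxDeg D : ℝ≥0∞) * ncDist D i j ∧
    gDist D i j / (maxDeg D : ℝ≥0∞) ≤ ncDist D i j := by
  by_cases hij : i = j
  · subst hij
    refine ⟨?_, ?_, ?_⟩
    · rw [gDist_self']; exact zero_le
    · rw [ncDist_self']; exact zero_le
    · rw [gDist_self', ENNReal.zero_div]; exact zero_le
  -- basic symmetry facts
  have hnormsym : ∀ u v : Fin n, ‖D v u‖ = ‖D u v‖ := by
    intro u v
    rw [← hherm.apply u v]
    exact (norm_star _).symm
  have hDsymm0 : ∀ u v : Fin n, D u v ≠ 0 → D v u ≠ 0 := by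
    intro u v h h0
    exact h (by rw [← hherm.apply u v, h0, star_zero])
  have hadjsymm : ∀ {u v : Fin n}, Adjac D u v → Adjac D v u :=
    fun {u v} h => ⟨h.1.symm, hDsymm0 u v h.2⟩
  -- degrees are positive
  have hdeg : ∀ u, 0 < degD D u := by
    intro u
    classical
    obtain ⟨w, hw⟩ : ∃ w, w ≠ u := by
      rcases eq_or_ne u i with rfl | h
      · exact ⟨j, fun hh => hij hh.symm⟩
      · exact ⟨i, h.symm⟩
    obtain ⟨p, hp⟩ := hconn u w
    match p, hp with
    | [], ⟨_, h2⟩ =>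
      simp only [List.getLast_singleton] at h2
      exact absurd h2.symm hw
    | v :: rest, ⟨h1, _⟩ =>
      dsimp only [List.Chain] at h1
      rw [List.chain_cons] at h1
      unfold degD
      exact Finset.card_pos.mpr ⟨v, Finset.mem_filter.mpr ⟨Finset.mem_univ _, h1.1⟩⟩
  have hdegle : ∀ u, degD D u ≤ maxDeg D := fun u => Finset.le_sup (Finset.mem_univ u)
  have hmaxpos : 0 < maxDeg D := lt_of_lt_of_le (hdeg i) (hdegle i)
  set sq : Fin n → ℝ := fun u => Real.sqrt (degD D u) with hsq
  have hsqpos : ∀ u, 0 < sq u := fun u => Real.sqrt_pos.mpr (by exact_mod_cast hdeg u)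
  have hMzero : ∀ (a : Fin n → ℂ) (u v : Fin n), ¬ Adjac D u v →
      commD (DDelta D) a u v = 0 := by
    intro a u v hna
    rw [commD_apply']
    rcases eq_or_ne u v with rfl | hne
    · simp
    · have hD : D u v = 0 := by by_contra hD; exact hna ⟨hne, hD⟩
      rw [DDelta_apply', hD]
      ring
  -- Part 1
  set a : Fin n → ℂ := fun k => ((gDist D i k).toReal : ℂ) with ha
  have hfin : ∀ k, gDist D i k ≠ ∞ := fun k => gDist_ne_top' (hconn i k)
  have hedge : ∀ u v : Fin n, Adjac D u v → ‖a v - a u‖ ≤ ‖D u v‖⁻¹ := by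
    intro u v hadj
    have hvu := hadjsymm hadj
    have h1 := gDist_triangle_edge' (i := i) hadj
    have h2 := gDist_triangle_edge' (i := i) hvu
    have hD0 : (0:ℝ) < ‖D u v‖ := norm_pos_iff.mpr hadj.2
    have ht1 : (gDist D i v).toReal ≤ (gDist D i u).toReal + ‖D u v‖⁻¹ := by
      have hfin2 : gDist D i u + eWeight D u v ≠ ∞ := by
        rw [ne_eq, ENNReal.add_eq_top]
        push_neg
        exact ⟨hfin u, eWeight_ne_top' hadj.2⟩
      have hmono := ENNReal.toReal_mono hfin2 h1
      rwa [ENNReal.toReal_add (hfin u) (eWeight_ne_top' hadj.2),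
        eWeight_toReal' hadj.2] at hmono
    have ht2 : (gDist D i u).toReal ≤ (gDist D i v).toReal + ‖D u v‖⁻¹ := by
      have hfin2 : gDist D i v + eWeight D v u ≠ ∞ := by
        rw [ne_eq, ENNReal.add_eq_top]
        push_neg
        exact ⟨hfin v, eWeight_ne_top' hvu.2⟩
      have hmono := ENNReal.toReal_mono hfin2 h2
      rwa [ENNReal.toReal_add (hfin v) (eWeight_ne_top' hvu.2),
        eWeight_toReal' hvu.2, hnormsym u v] at hmono
    have hcast : a v - a u = (((gDist D i v).toReal - (gDist D i u).toReal : ℝ) : ℂ) := by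
      simp [ha]
    rw [hcast, Complex.norm_real, Real.norm_eq_abs]
    exact abs_sub_le_iff.mpr ⟨by linarith, by linarith⟩
  have hMbound : ∀ u v : Fin n, Adjac D u v →
      ‖commD (DDelta D) a u v‖ * sq v ≤ (sq u)⁻¹ := by
    intro u v hadj
    have hD0 : (0:ℝ) < ‖D u v‖ := norm_pos_iff.mpr hadj.2
    have hnormM : ‖commD (DDelta D) a u v‖
        = (sq u)⁻¹ * ‖D u v‖ * (sq v)⁻¹ * ‖a v - a u‖ := by
      rw [commD_apply', DDelta_apply', norm_mul, norm_mul, norm_mul,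
        Complex.norm_real, Complex.norm_real, Real.norm_eq_abs, Real.norm_eq_abs,
        abs_of_nonneg (inv_nonneg.mpr (Real.sqrt_nonneg _)),
        abs_of_nonneg (inv_nonneg.mpr (Real.sqrt_nonneg _))]
    calc ‖commD (DDelta D) a u v‖ * sq v
        = (sq u)⁻¹ * (‖D u v‖ * ‖a v - a u‖) * ((sq v)⁻¹ * sq v) := by
          rw [hnormM]; ring
      _ = (sq u)⁻¹ * (‖D u v‖ * ‖a v - a u‖) := by
          rw [inv_mul_cancel₀ (hsqpos v).ne', mul_one]
      _ ≤ (sq u)⁻¹ * (‖D u v‖ * ‖D u v‖⁻¹) := by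
          refine mul_le_mul_of_nonneg_left ?_ (inv_nonneg.mpr (Real.sqrt_nonneg _))
          exact mul_le_mul_of_nonneg_left (hedge u v hadj) hD0.le
      _ = (sq u)⁻¹ := by rw [mul_inv_cancel₀ hD0.ne', mul_one]
  have hrow : ∀ u, ∑ v, ‖commD (DDelta D) a u v‖ * sq v ≤ sq u := by
    intro u
    classical
    have hfilter : ∑ v, ‖commD (DDelta D) a u v‖ * sq v
        = ∑ v ∈ Finset.univ.filter (Adjac D u), ‖commD (DDelta D) a u v‖ * sq v := by
      symm
      refine Finset.sum_filter_of_ne fun v _ hne => ?_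
      by_contra hna
      exact hne (by rw [hMzero a u v hna, norm_zero, zero_mul])
    rw [hfilter]
    have hcard : (Finset.univ.filter (Adjac D u)).card = degD D u := by
      unfold degD; congr!
    calc ∑ v ∈ Finset.univ.filter (Adjac D u), ‖commD (DDelta D) a u v‖ * sq v
        ≤ ∑ _v ∈ Finset.univ.filter (Adjac D u), (sq u)⁻¹ :=
          Finset.sum_le_sum fun v hv => hMbound u v (Finset.mem_filter.mp hv).2
      _ = (degD D u : ℝ) * (sq u)⁻¹ := by rw [Finset.sum_const, hcard, nsmul_eq_mul]
      _ = sq u := by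
          have hss : (degD D u : ℝ) = sq u * sq u :=
            (Real.mul_self_sqrt (Nat.cast_nonneg _)).symm
          rw [hss, mul_inv_cancel_right₀ (hsqpos u).ne']
  have hsymnorm : ∀ u v : Fin n,
      ‖commD (DDelta D) a u v‖ = ‖commD (DDelta D) a v u‖ := by
    intro u v
    rw [commD_apply', commD_apply', DDelta_apply', DDelta_apply']
    simp only [norm_mul]
    rw [hnormsym u v, norm_sub_rev]
    ring
  have hcol : ∀ v, ∑ u, ‖commD (DDelta D) a u v‖ * sq u ≤ sq v := by
    intro v
    have hsw : ∑ u, ‖commD (DDelta D) a u v‖ * sq u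
        = ∑ u, ‖commD (DDelta D) a v u‖ * sq u :=
      Finset.sum_congr rfl fun u _ => by rw [hsymnorm]
    rw [hsw]
    exact hrow v
  have hop1 : opNorm (commD (DDelta D) a) ≤ 1 :=
    opNorm_le_bound' zero_le_one (schur' _ sq hsqpos hrow hcol)
  have part1 : gDist D i j ≤ ncDist (DDelta D) i j := by
    have hval : ENNReal.ofReal ‖a i - a j‖ = gDist D i j := by
      have hai : a i = 0 := by simp [ha, gDist_self']
      rw [hai, zero_sub, norm_neg]
      simp only [ha]
      rw [Complex.norm_real, Real.norm_eq_abs, abs_of_nonneg ENNReal.toReal_nonneg,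
        ENNReal.ofReal_toReal (hfin j)]
    rw [← hval]
    unfold ncDist
    exact le_iSup₂ (f := fun (a : Fin n → ℂ) (_ : opNorm (commD (DDelta D) a) ≤ 1) =>
      ENNReal.ofReal ‖a i - a j‖) a hop1
  -- Part 2
  have part2 : ncDist (DDelta D) i j ≤ (maxDeg D : ℝ≥0∞) * ncDist D i j := by
    refine iSup₂_le fun b hb => ?_
    have hsand : commD D b = Matrix.diagonal (fun u => ((sq u : ℝ) : ℂ))
        * commD (DDelta D) b * Matrix.diagonal (fun u => ((sq u : ℝ) : ℂ)) := by
      ext u v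
      rw [Matrix.mul_diagonal, Matrix.diagonal_mul, commD_apply', commD_apply',
        DDelta_apply']
      rcases eq_or_ne (D u v) 0 with hD | hD
      · rw [hD]; ring
      · have h1 : ((sq u : ℝ) : ℂ) ≠ 0 := by
          exact_mod_cast (hsqpos u).ne'
        have h2 : ((sq v : ℝ) : ℂ) ≠ 0 := by
          exact_mod_cast (hsqpos v).ne'
        rw [show (((Real.sqrt (degD D u))⁻¹ : ℝ) : ℂ) = ((sq u : ℝ) : ℂ)⁻¹ by
          rw [← Complex.ofReal_inv],
          show (((Real.sqrt (degD D v))⁻¹ : ℝ) : ℂ) = ((sq v : ℝ) : ℂ)⁻¹ by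
          rw [← Complex.ofReal_inv]]
        field_simp
    have hSle : opNorm (Matrix.diagonal (fun u => ((sq u : ℝ) : ℂ)))
        ≤ Real.sqrt (maxDeg D) := by
      refine opNorm_diagonal_le' _ (Real.sqrt_nonneg _) fun u => ?_
      rw [Complex.norm_real, Real.norm_eq_abs, abs_of_nonneg (Real.sqrt_nonneg _)]
      exact Real.sqrt_le_sqrt (by exact_mod_cast hdegle u)
    have hDb : opNorm (commD D b) ≤ (maxDeg D : ℝ) := by
      rw [hsand]
      have hs1 := opNorm_mul_le' (Matrix.diagonal (fun u => ((sq u : ℝ) : ℂ))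
        * commD (DDelta D) b) (Matrix.diagonal (fun u => ((sq u : ℝ) : ℂ)))
      have hs2 := opNorm_mul_le' (Matrix.diagonal (fun u => ((sq u : ℝ) : ℂ)))
        (commD (DDelta D) b)
      have hstep : opNorm (Matrix.diagonal (fun u => ((sq u : ℝ) : ℂ))
          * commD (DDelta D) b * Matrix.diagonal (fun u => ((sq u : ℝ) : ℂ)))
          ≤ (Real.sqrt (maxDeg D) * 1) * Real.sqrt (maxDeg D) := by
        refine hs1.trans ?_
        refine mul_le_mul ?_ hSle (opNorm_nonneg' _) (by positivity)
        refine hs2.trans ?_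
        exact mul_le_mul hSle hb (opNorm_nonneg' _) (Real.sqrt_nonneg _)
      refine hstep.trans ?_
      rw [mul_one, Real.mul_self_sqrt (Nat.cast_nonneg _)]
    set c : ℂ := ((maxDeg D : ℂ))⁻¹ with hc
    have hnc : ‖c‖ = ((maxDeg D : ℝ))⁻¹ := by
      rw [hc, norm_inv]
      norm_num
    have hmne : (maxDeg D : ℝ) ≠ 0 := by exact_mod_cast hmaxpos.ne'
    have hb' : opNorm (commD D (c • b)) ≤ 1 := by
      rw [commD_smul', opNorm_smul', hnc]
      calc ((maxDeg D : ℝ))⁻¹ * opNorm (commD D b)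
          ≤ ((maxDeg D : ℝ))⁻¹ * (maxDeg D : ℝ) :=
            mul_le_mul_of_nonneg_left hDb (by positivity)
        _ = 1 := inv_mul_cancel₀ hmne
    have hle : ENNReal.ofReal ‖(c • b) i - (c • b) j‖ ≤ ncDist D i j := by
      unfold ncDist
      exact le_iSup₂ (f := fun (x : Fin n → ℂ) (_ : opNorm (commD D x) ≤ 1) =>
        ENNReal.ofReal ‖x i - x j‖) (c • b) hb'
    have hcomp : ENNReal.ofReal ‖b i - b j‖
        = (maxDeg D : ℝ≥0∞) * ENNReal.ofReal ‖(c • b) i - (c • b) j‖ := by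
      have hsc : (c • b) i - (c • b) j = c * (b i - b j) := by
        simp only [Pi.smul_apply, smul_eq_mul]
        ring
      rw [hsc, norm_mul, hnc, ← ENNReal.ofReal_natCast (maxDeg D),
        ← ENNReal.ofReal_mul (Nat.cast_nonneg _)]
      congr 1
      rw [← mul_assoc, mul_inv_cancel₀ hmne, one_mul]
    rw [hcomp]
    exact mul_le_mul_right hle _
  refine ⟨part1, part2, ?_⟩
  exact ENNReal.div_le_of_le_mul ((part1.trans part2).trans_eq (mul_comm _ _))
end
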